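/- For a binary classifier f with continuous score distribution, AUPRC(f) = 1 − P(y = 0) · E_{t ~ f(x)|y=1}[ FPR(f, t) / P(f(x) > t) ], where the expectation is over the distribution of scores assigned to positive samples. -/

import Mathlib

open MeasureTheory

/-- AUPRC(f) = 1 − P(y=0) · E_{t ~ f(x)|y=1}[FPR(f,t)/P(f(x)>t)].
With conditional score densities p₊, p₋ on (0,1), TPR(τ) = ∫_τ^1 p₊, FPR(τ) = ∫_τ^1 p₋,
firing rate FR(τ) = py·TPR(τ) + (1-py)·FPR(τ) = P(f(x) > τ), and precision
Prec(τ) = py·TPR(τ)/FR(τ), the AUPRC = ∫ Prec d(TPR) = ∫₀¹ Prec(τ)·p₊(τ) dτ. -/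
theorem auprc_expectation_form
    (p_pos p_neg TPR FPR FR Prec : ℝ → ℝ) (py : ℝ)
    (hpy0 : 0 < py) (hpy1 : py < 1)
    (hpos : ∀ t, 0 ≤ p_pos t) (hneg : ∀ t, 0 ≤ p_neg t)
    (hcpos : Continuous p_pos) (hcneg : Continuous p_neg)
    (hpos_one : (∫ t in (0:ℝ)..1, p_pos t) = 1)
    (hneg_one : (∫ t in (0:ℝ)..1, p_neg t) = 1)
    (hTPR : ∀ τ, TPR τ = ∫ t in τ..1, p_pos t)
    (hFPR : ∀ τ, FPR τ = ∫ t in τ..1, p_neg t)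
    (hFR : ∀ τ, FR τ = py * TPR τ + (1 - py) * FPR τ)
    (hFRpos : ∀ t ∈ Set.Ioo (0:ℝ) 1, p_pos t ≠ 0 → 0 < FR t)
    (hPrec : ∀ τ, Prec τ = py * TPR τ / FR τ) :
    (∫ τ in (0:ℝ)..1, Prec τ * p_pos τ)
      = 1 - (1 - py) * ∫ t in (0:ℝ)..1, (FPR t / FR t) * p_pos t := by
  have h1py : (0:ℝ) < 1 - py := by linarith
  set g : ℝ → ℝ := fun τ => (FPR τ / FR τ) * p_pos τ with hg
  -- continuity of TPR, FPR, FR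
  have hTPRc : Continuous TPR := by
    have h1 : Continuous fun τ => ∫ t in (1:ℝ)..τ, p_pos t :=
      intervalIntegral.continuous_primitive (fun a b => hcpos.intervalIntegrable a b) 1
    exact h1.neg.congr fun x => by
      rw [hTPR, intervalIntegral.integral_symm]; rfl
  have hFPRc : Continuous FPR := by
    have h1 : Continuous fun τ => ∫ t in (1:ℝ)..τ, p_neg t :=
      intervalIntegral.continuous_primitive (fun a b => hcneg.intervalIntegrable a b) 1
    exact h1.neg.congr fun x => by
      rw [hFPR, intervalIntegral.integral_symm]; rfl
  have hFRc : Continuous FR := by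
    have h1 : Continuous fun x => py * TPR x + (1 - py) * FPR x :=
      ((continuous_const.mul hTPRc).add (continuous_const.mul hFPRc))
    exact h1.congr fun x => (hFR x).symm
  have hTPRnn : ∀ τ ∈ Set.Ioo (0:ℝ) 1, 0 ≤ TPR τ := by
    intro τ hτ
    rw [hTPR]
    exact intervalIntegral.integral_nonneg hτ.2.le (fun t _ => hpos t)
  have hFPRnn : ∀ τ ∈ Set.Ioo (0:ℝ) 1, 0 ≤ FPR τ := by
    intro τ hτ
    rw [hFPR]
    exact intervalIntegral.integral_nonneg hτ.2.le (fun t _ => hneg t)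
  -- pointwise identity on Ioo 0 1
  have key : ∀ τ ∈ Set.Ioo (0:ℝ) 1,
      Prec τ * p_pos τ = p_pos τ - (1 - py) * g τ := by
    intro τ hτ
    by_cases hp : p_pos τ = 0
    · simp [hg, hp]
    · have hFRτ : 0 < FR τ := hFRpos τ hτ hp
      have hFRne : FR τ ≠ 0 := ne_of_gt hFRτ
      rw [hPrec, hg]
      field_simp
      rw [hFR]
      ring
  -- bound for integrability
  have hbound : ∀ τ ∈ Set.Ioo (0:ℝ) 1, ‖g τ‖ ≤ p_pos τ / (1 - py) := by
    intro τ hτ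
    by_cases hp : p_pos τ = 0
    · simp only [hg, hp, mul_zero, norm_zero]
      positivity
    · have hFRτ : 0 < FR τ := hFRpos τ hτ hp
      have hFPRτ := hFPRnn τ hτ
      have hTPRτ := hTPRnn τ hτ
      have hratio : FPR τ / FR τ ≤ 1 / (1 - py) := by
        rw [div_le_div_iff₀ hFRτ h1py]
        have : (1 - py) * FPR τ ≤ FR τ := by
          rw [hFR]; nlinarith
        linarith [this]
      have h0 : 0 ≤ g τ := by
        exact mul_nonneg (div_nonneg hFPRτ hFRτ.le) (hpos τ)
      rw [Real.norm_eq_abs, abs_of_nonneg h0, hg]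
      calc FPR τ / FR τ * p_pos τ ≤ 1 / (1 - py) * p_pos τ :=
            mul_le_mul_of_nonneg_right hratio (hpos τ)
        _ = p_pos τ / (1 - py) := by ring
  -- measurability and integrability of g
  have hgmeas : Measurable g :=
    (hFPRc.measurable.div hFRc.measurable).mul hcpos.measurable
  have hgint : IntervalIntegrable g volume 0 1 := by
    rw [intervalIntegrable_iff_integrableOn_Ioc_of_le (by norm_num : (0:ℝ) ≤ 1)]
    apply Integrable.mono' ((hcpos.integrableOn_Ioc).div_const (1 - py))
      (hgmeas.aestronglyMeasurable.restrict)
    have h1 : (volume.restrict (Set.Ioc (0:ℝ) 1)) {(1:ℝ)} = 0 := by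
      simp [Measure.restrict_apply]
    filter_upwards [ae_restrict_mem measurableSet_Ioc,
      (measure_eq_zero_iff_ae_notMem.mp h1)] with τ hτ h1τ
    have hτ' : τ ∈ Set.Ioo (0:ℝ) 1 := ⟨hτ.1, lt_of_le_of_ne hτ.2 (by simpa using h1τ)⟩
    exact hbound τ hτ'
  have hppint : IntervalIntegrable p_pos volume 0 1 := hcpos.intervalIntegrable 0 1
  -- congruence a.e.
  have hcongr : (∫ τ in (0:ℝ)..1, Prec τ * p_pos τ)
      = ∫ τ in (0:ℝ)..1, (p_pos τ - (1 - py) * g τ) := by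
    apply intervalIntegral.integral_congr_ae
    have h1 : (volume : Measure ℝ) {(1:ℝ)} = 0 := by simp
    filter_upwards [measure_eq_zero_iff_ae_notMem.mp h1] with τ h1τ hτ
    rw [Set.uIoc_of_le (by norm_num : (0:ℝ) ≤ 1)] at hτ
    have hτ' : τ ∈ Set.Ioo (0:ℝ) 1 := ⟨hτ.1, lt_of_le_of_ne hτ.2 (by simpa using h1τ)⟩
    exact key τ hτ'
  rw [hcongr, intervalIntegral.integral_sub hppint (hgint.const_mul _),
    intervalIntegral.integral_const_mul, hpos_one]
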